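/- Let p be the n-th orthonormal polynomial for the weight e^{−nV(x)} on [−1,1], where V is C¹ on (−1,1) and e^{−nV} extends continuously by 0 at x = ±1. Then ∫_{−1}^1 (p'(x))² e^{−nV(x)} dx ≤ 2 ∫_{−1}^1 p(x)² (nV'(x))² e^{−nV(x)} dx. -/

import Mathlib

open MeasureTheory intervalIntegral

set_option maxHeartbeats 1000000

theorem orthopoly_derivative_bound (n : ℕ) (hn : 0 < n) (V V' : ℝ → ℝ)
    (hV : ∀ x ∈ Set.Ioo (-1 : ℝ) 1, HasDerivAt V (V' x) x)
    (hV'cont : ContinuousOn V' (Set.Ioo (-1 : ℝ) 1))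
    (hlim1 : Filter.Tendsto (fun x => Real.exp (-(n : ℝ) * V x))
      (nhdsWithin 1 (Set.Iio 1)) (nhds 0))
    (hlim2 : Filter.Tendsto (fun x => Real.exp (-(n : ℝ) * V x))
      (nhdsWithin (-1) (Set.Ioi (-1))) (nhds 0))
    (p : Polynomial ℝ) (hdeg : p.natDegree = n)
    (horth : ∀ q : Polynomial ℝ, q.natDegree < n →
      ∫ x in (-1 : ℝ)..1, p.eval x * q.eval x * Real.exp (-(n : ℝ) * V x) = 0)
    (hint1 : IntervalIntegrable
      (fun x => (Polynomial.derivative p).eval x ^ 2 * Real.exp (-(n : ℝ) * V x))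
      volume (-1) 1)
    (hint2 : IntervalIntegrable
      (fun x => p.eval x ^ 2 * ((n : ℝ) * V' x) ^ 2 * Real.exp (-(n : ℝ) * V x))
      volume (-1) 1) :
    ∫ x in (-1 : ℝ)..1, (Polynomial.derivative p).eval x ^ 2 * Real.exp (-(n : ℝ) * V x) ≤
      2 * ∫ x in (-1 : ℝ)..1,
        p.eval x ^ 2 * ((n : ℝ) * V' x) ^ 2 * Real.exp (-(n : ℝ) * V x) := by
  set w : ℝ → ℝ := fun x => Real.exp (-(n : ℝ) * V x) with hw
  set d1 : Polynomial ℝ := Polynomial.derivative p with hd1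
  set d2 : Polynomial ℝ := Polynomial.derivative d1 with hd2
  have hwpos : ∀ x, 0 < w x := fun x => Real.exp_pos _
  have hVcont : ContinuousOn V (Set.Ioo (-1 : ℝ) 1) :=
    fun x hx => (hV x hx).continuousAt.continuousWithinAt
  have hwcont : ContinuousOn w (Set.Ioo (-1 : ℝ) 1) :=
    Real.continuous_exp.comp_continuousOn (continuousOn_const.mul hVcont)
  -- global bound on w on Ioo (-1) 1
  obtain ⟨M, hMb⟩ : ∃ M : ℝ, ∀ x ∈ Set.Ioo (-1 : ℝ) 1, w x ≤ M := by
    have h1 : ∀ᶠ x in nhdsWithin 1 (Set.Iio 1), w x < 1 :=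
      hlim1.eventually_lt_const (by norm_num)
    have h2 : ∀ᶠ x in nhdsWithin (-1 : ℝ) (Set.Ioi (-1)), w x < 1 :=
      hlim2.eventually_lt_const (by norm_num)
    obtain ⟨a, ha, hsub1⟩ := mem_nhdsLT_iff_exists_Ioo_subset.1 h1
    obtain ⟨b, hb, hsub2⟩ := mem_nhdsGT_iff_exists_Ioo_subset.1 h2
    set a' : ℝ := max a 0 with ha'
    set b' : ℝ := min b 0 with hb'
    have hb'a' : b' ≤ a' := le_trans (min_le_right _ _) (le_max_right _ _)
    have hIcc : Set.Icc b' a' ⊆ Set.Ioo (-1 : ℝ) 1 := by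
      intro x hx
      constructor
      · exact lt_of_lt_of_le (lt_min hb (by norm_num)) hx.1
      · exact lt_of_le_of_lt hx.2 (max_lt (Set.mem_Iio.1 ha) (by norm_num))
    obtain ⟨C, hC⟩ := (isCompact_Icc (a := b') (b := a')).exists_bound_of_continuousOn
      (hwcont.mono hIcc)
    refine ⟨max C 1, fun x hx => ?_⟩
    rcases lt_or_ge x b' with hxb | hxb
    · have : w x < 1 := hsub2 ⟨hx.1, lt_of_lt_of_le hxb (min_le_left _ _)⟩
      exact le_trans this.le (le_max_right _ _)
    rcases le_or_gt x a' with hxa | hxa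
    · have := hC x ⟨hxb, hxa⟩
      exact le_trans (le_of_abs_le (by simpa using this)) (le_max_left _ _)
    · have : w x < 1 := hsub1 ⟨lt_of_le_of_lt (le_max_left _ _) hxa, hx.2⟩
      exact le_trans this.le (le_max_right _ _)
  have hle : (-1 : ℝ) ≤ 1 := by norm_num
  have toII : ∀ f : ℝ → ℝ, IntegrableOn f (Set.Ioo (-1 : ℝ) 1) volume →
      IntervalIntegrable f volume (-1) 1 := by
    intro f hf
    rw [intervalIntegrable_iff_integrableOn_Ioo_of_le hle]
    exact hf
  have fromII : ∀ f : ℝ → ℝ, IntervalIntegrable f volume (-1) 1 →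
      IntegrableOn f (Set.Ioo (-1 : ℝ) 1) volume := by
    intro f hf
    rw [intervalIntegrable_iff_integrableOn_Ioo_of_le hle] at hf
    exact hf
  -- integrability of p * p'' * w
  have hqI : IntervalIntegrable (fun x => p.eval x * d2.eval x * w x) volume (-1) 1 := by
    apply toII
    obtain ⟨C, hC⟩ := (isCompact_Icc (a := (-1 : ℝ)) (b := 1)).exists_bound_of_continuousOn
      (Continuous.continuousOn (p.continuous.mul d2.continuous))
    have hCnn : 0 ≤ C := le_trans (norm_nonneg _) (hC 0 (by norm_num))
    refine Integrable.mono' (g := fun _ => C * M)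
      (integrableOn_const measure_Ioo_lt_top.ne) ?_ ?_
    · exact ((p.continuous.mul d2.continuous).continuousOn.mul hwcont).aestronglyMeasurable
        measurableSet_Ioo
    · refine (ae_restrict_iff' measurableSet_Ioo).2 (Filter.Eventually.of_forall fun x hx => ?_)
      have h1 : ‖p.eval x * d2.eval x‖ ≤ C := hC x (Set.mem_Icc.2 ⟨hx.1.le, hx.2.le⟩)
      have h2 : w x ≤ M := hMb x hx
      have h3 : 0 < w x := hwpos x
      calc ‖p.eval x * d2.eval x * w x‖ = ‖p.eval x * d2.eval x‖ * w x := by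
            rw [norm_mul, Real.norm_of_nonneg h3.le]
        _ ≤ C * M := mul_le_mul h1 h2 h3.le hCnn
  -- integrability of p * p' * (n V') * w
  have hpvI : IntervalIntegrable
      (fun x => p.eval x * d1.eval x * ((n : ℝ) * V' x) * w x) volume (-1) 1 := by
    apply toII
    have hsum : IntegrableOn
        (fun x => d1.eval x ^ 2 * w x + p.eval x ^ 2 * ((n : ℝ) * V' x) ^ 2 * w x)
        (Set.Ioo (-1 : ℝ) 1) volume := by
      exact (fromII _ hint1).add (fromII _ hint2)
    refine Integrable.mono' hsum ?_ ?_
    · exact (((p.continuous.mul d1.continuous).continuousOn.mul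
        (continuousOn_const.mul hV'cont)).mul hwcont).aestronglyMeasurable measurableSet_Ioo
    · refine Filter.Eventually.of_forall fun x => ?_
      have h3 : 0 < w x := hwpos x
      have key : |p.eval x * d1.eval x * ((n : ℝ) * V' x)| ≤
          d1.eval x ^ 2 + p.eval x ^ 2 * ((n : ℝ) * V' x) ^ 2 := by
        rcases abs_cases (p.eval x * d1.eval x * ((n : ℝ) * V' x)) with ⟨h, _⟩ | ⟨h, _⟩ <;>
          rw [h] <;> nlinarith [sq_nonneg (d1.eval x - p.eval x * ((n : ℝ) * V' x)),
            sq_nonneg (d1.eval x + p.eval x * ((n : ℝ) * V' x))]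
      calc ‖p.eval x * d1.eval x * ((n : ℝ) * V' x) * w x‖
          = |p.eval x * d1.eval x * ((n : ℝ) * V' x)| * w x := by
            rw [Real.norm_eq_abs, abs_mul, abs_of_pos h3]
        _ ≤ (d1.eval x ^ 2 + p.eval x ^ 2 * ((n : ℝ) * V' x) ^ 2) * w x :=
            mul_le_mul_of_nonneg_right key h3.le
        _ = d1.eval x ^ 2 * w x + p.eval x ^ 2 * ((n : ℝ) * V' x) ^ 2 * w x := by ring
  -- Fundamental theorem of calculus: integration by parts
  have hderiv : ∀ x ∈ Set.Ioo (-1 : ℝ) 1,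
      HasDerivAt (fun x => p.eval x * d1.eval x * w x)
        (d1.eval x ^ 2 * w x + p.eval x * d2.eval x * w x -
          p.eval x * d1.eval x * ((n : ℝ) * V' x) * w x) x := by
    intro x hx
    have hwd : HasDerivAt w (w x * (-(n : ℝ) * V' x)) x :=
      ((hV x hx).const_mul (-(n : ℝ))).exp
    have hpd : HasDerivAt (fun x => p.eval x * d1.eval x)
        (d1.eval x * d1.eval x + p.eval x * d2.eval x) x :=
      (p.hasDerivAt x).mul (d1.hasDerivAt x)
    have := hpd.mul hwd
    exact this.congr_deriv (by ring)
  have hintsum : IntervalIntegrable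
      (fun x => d1.eval x ^ 2 * w x + p.eval x * d2.eval x * w x -
        p.eval x * d1.eval x * ((n : ℝ) * V' x) * w x) volume (-1) 1 :=
    (hint1.add hqI).sub hpvI
  have hlimA : Filter.Tendsto (fun x => p.eval x * d1.eval x * w x)
      (nhdsWithin (-1 : ℝ) (Set.Ioi (-1))) (nhds 0) := by
    have hc : Filter.Tendsto (fun x => p.eval x * d1.eval x)
        (nhdsWithin (-1 : ℝ) (Set.Ioi (-1)))
        (nhds (p.eval (-1) * d1.eval (-1))) :=
      ((p.continuous.mul d1.continuous).tendsto _).mono_left nhdsWithin_le_nhds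
    simpa using hc.mul hlim2
  have hlimB : Filter.Tendsto (fun x => p.eval x * d1.eval x * w x)
      (nhdsWithin (1 : ℝ) (Set.Iio 1)) (nhds 0) := by
    have hc : Filter.Tendsto (fun x => p.eval x * d1.eval x)
        (nhdsWithin (1 : ℝ) (Set.Iio 1)) (nhds (p.eval 1 * d1.eval 1)) :=
      ((p.continuous.mul d1.continuous).tendsto _).mono_left nhdsWithin_le_nhds
    simpa using hc.mul hlim1
  have key : ∫ x in (-1 : ℝ)..1,
      (d1.eval x ^ 2 * w x + p.eval x * d2.eval x * w x -
        p.eval x * d1.eval x * ((n : ℝ) * V' x) * w x) = 0 := by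
    have := intervalIntegral.integral_eq_sub_of_hasDerivAt_of_tendsto
      (a := (-1 : ℝ)) (b := 1) (by norm_num) hderiv hintsum hlimA hlimB
    simpa using this
  have horth2 : ∫ x in (-1 : ℝ)..1, p.eval x * d2.eval x * w x = 0 := by
    apply horth
    have h1 : d1.natDegree ≤ n - 1 := hdeg ▸ p.natDegree_derivative_le
    have h2 : d2.natDegree ≤ d1.natDegree - 1 := d1.natDegree_derivative_le
    omega
  rw [intervalIntegral.integral_sub (hint1.add hqI) hpvI,
    intervalIntegral.integral_add hint1 hqI, horth2, add_zero, sub_eq_zero] at key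
  -- Now I = K where K = ∫ p p' (nV') w;  bound K pointwise.
  have hmono : (∫ x in (-1 : ℝ)..1, p.eval x * d1.eval x * ((n : ℝ) * V' x) * w x) ≤
      ∫ x in (-1 : ℝ)..1,
        ((1 : ℝ) / 2 * (d1.eval x ^ 2 * w x) +
          1 / 2 * (p.eval x ^ 2 * ((n : ℝ) * V' x) ^ 2 * w x)) := by
    refine intervalIntegral.integral_mono_on hle hpvI
      ((hint1.const_mul (1 / 2)).add (hint2.const_mul (1 / 2))) fun x _ => ?_
    have h3 : (0 : ℝ) ≤ w x := (hwpos x).le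
    nlinarith [mul_nonneg (sq_nonneg (d1.eval x - p.eval x * ((n : ℝ) * V' x))) h3]
  rw [intervalIntegral.integral_add (hint1.const_mul (1 / 2)) (hint2.const_mul (1 / 2)),
    intervalIntegral.integral_const_mul, intervalIntegral.integral_const_mul] at hmono
  have hJnn : 0 ≤ ∫ x in (-1 : ℝ)..1, p.eval x ^ 2 * ((n : ℝ) * V' x) ^ 2 * w x := by
    refine intervalIntegral.integral_nonneg hle fun x _ => ?_
    positivity
  linarith [key, hmono]
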